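/- For every z > 0, the left-hand derivative of H⁻¹ at z exists and equals 1/(G(H⁻¹(z)) − 1). -/

import Mathlib

open MeasureTheory Filter Set Topology

/-- for every `z > 0` the left-hand derivative of `H⁻¹` at `z` exists and
equals `1 / (G(H⁻¹(z)) - 1)`. -/
theorem stmt_3
    (G : ℝ → ℝ) (ystar : ℝ)
    (hmono : Monotone G)
    (hrc : ∀ y, ContinuousWithinAt G (Set.Ici y) y)
    (hG0 : ∀ y, 0 ≤ G y) (hG1 : ∀ y, G y ≤ 1)
    (hstar : ∀ y, G y = 1 ↔ ystar ≤ y)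
    (H : ℝ → ℝ)
    (hH : ∀ y, H y = ∫ η in Set.Ioc y ystar, (1 - G η))
    (Hinv : ℝ → ℝ)
    (hinv_mem : ∀ z, 0 ≤ z → Hinv z ≤ ystar)
    (hinv_right : ∀ z, 0 ≤ z → H (Hinv z) = z)
    (hinv_left : ∀ y, y ≤ ystar → Hinv (H y) = y) :
    ∀ z : ℝ, 0 < z →
      HasDerivWithinAt Hinv (1 / (G (Hinv z) - 1)) (Set.Iic z) z := by
  intro z hz
  set y₀ := Hinv z with hy₀def
  have hy₀star : y₀ ≤ ystar := hinv_mem z hz.le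
  have hHy₀ : H y₀ = z := hinv_right z hz.le
  -- interval integrability of 1 - G
  have hint : ∀ a b : ℝ, IntervalIntegrable (fun t => 1 - G t) volume a b := fun a b =>
    intervalIntegrable_const.sub hmono.intervalIntegrable
  -- integral of 1 - G vanishes beyond ystar
  have hzero : ∀ a b : ℝ, ystar ≤ a → a ≤ b → (∫ t in a..b, (1 - G t)) = 0 := by
    intro a b ha hab
    rw [intervalIntegral.integral_of_le hab]
    rw [setIntegral_congr_fun measurableSet_Ioc (g := fun _ => (0 : ℝ))]
    · simp
    · intro t ht
      have : G t = 1 := (hstar t).mpr (ha.trans ht.1.le)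
      simp [this]
  have hHystar : H ystar = 0 := by
    rw [hH]; simp
  -- key identity
  have key : ∀ a b : ℝ, a ≤ b → H a = H b + ∫ t in a..b, (1 - G t) := by
    intro a b hab
    rcases le_or_gt b ystar with hb | hb
    · rw [hH a, hH b, ← intervalIntegral.integral_of_le (hab.trans hb),
        ← intervalIntegral.integral_of_le hb,
        ← intervalIntegral.integral_add_adjacent_intervals (hint a b) (hint b ystar)]
      ring
    · have hb0 : H b = 0 := by
        rw [hH b]
        have : Set.Ioc b ystar = ∅ := Set.Ioc_eq_empty (not_lt.mpr hb.le)
        rw [this]; simp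
      rcases le_or_gt a ystar with ha | ha
      · rw [hH a, ← intervalIntegral.integral_of_le ha, hb0,
          ← intervalIntegral.integral_add_adjacent_intervals (hint a ystar) (hint ystar b),
          hzero ystar b le_rfl hb.le]
        ring
      · have ha0 : H a = 0 := by
          rw [hH a]
          have : Set.Ioc a ystar = ∅ := Set.Ioc_eq_empty (not_lt.mpr ha.le)
          rw [this]; simp
        rw [ha0, hb0, hzero a b ha.le hab]; ring
  -- H is antitone
  have hanti : ∀ a b : ℝ, a ≤ b → H b ≤ H a := by
    intro a b hab
    rw [key a b hab]
    have : 0 ≤ ∫ t in a..b, (1 - G t) :=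
      intervalIntegral.integral_nonneg hab (fun t _ => by linarith [hG1 t])
    linarith
  -- y₀ < ystar and G y₀ < 1
  have hy₀lt : y₀ < ystar := by
    rcases lt_or_eq_of_le hy₀star with h | h
    · exact h
    · exfalso; rw [h] at hHy₀; rw [hHystar] at hHy₀; linarith
  have hGlt : G y₀ < 1 := by
    rcases lt_or_eq_of_le (hG1 y₀) with h | h
    · exact h
    · exact absurd ((hstar y₀).mp h) (not_le.mpr hy₀lt)
  have hne : G y₀ - 1 ≠ 0 := by linarith
  -- strict decrease from y₀
  have hstrict : ∀ y₁ : ℝ, y₀ < y₁ → y₁ < ystar → H y₁ < z := by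
    intro y₁ h1 h2
    have hG1lt : G y₁ < 1 := by
      rcases lt_or_eq_of_le (hG1 y₁) with h | h
      · exact h
      · exact absurd ((hstar y₁).mp h) (not_le.mpr h2)
    have hk := key y₀ y₁ h1.le
    have hlow : (y₁ - y₀) * (1 - G y₁) ≤ ∫ t in y₀..y₁, (1 - G t) := by
      have h := intervalIntegral.integral_mono_on (f := fun _ => 1 - G y₁)
        (g := fun t => 1 - G t) h1.le intervalIntegrable_const (hint y₀ y₁)
        (fun t ht => by have := hmono ht.2; linarith)
      rwa [intervalIntegral.integral_const, smul_eq_mul] at h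
    nlinarith [hHy₀]
  -- Hinv x > y₀ for 0 ≤ x < z, and Hinv x ≥ y₀ for 0 ≤ x ≤ z
  have hinv_gt : ∀ x : ℝ, 0 ≤ x → x < z → y₀ < Hinv x := by
    intro x hx0 hxz
    by_contra h
    push_neg at h
    have := hanti (Hinv x) y₀ h
    rw [hinv_right x hx0, hHy₀] at this
    linarith
  -- continuity of Hinv from the left at z
  have htend0 : Tendsto Hinv (𝓝[Set.Iio z] z) (𝓝 y₀) := by
    rw [Metric.tendsto_nhdsWithin_nhds]
    intro ε hε
    set y₁ := min (y₀ + ε / 2) ((y₀ + ystar) / 2) with hy₁def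
    have hy₁gt : y₀ < y₁ := lt_min (by linarith) (by linarith)
    have hy₁lt : y₁ < ystar := lt_of_le_of_lt (min_le_right _ _) (by linarith)
    have hy₁le : y₁ ≤ y₀ + ε / 2 := min_le_left _ _
    have hHy₁ : H y₁ < z := hstrict y₁ hy₁gt hy₁lt
    have hHy₁0 : 0 ≤ H y₁ := by
      have := hanti y₁ ystar hy₁lt.le
      rw [hHystar] at this; linarith
    refine ⟨z - H y₁, by linarith, ?_⟩
    intro x hx hdist
    rw [Real.dist_eq] at hdist ⊢
    have hx0 : 0 < x := by
      rw [abs_lt] at hdist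
      simp only [Set.mem_Iio] at hx
      linarith
    have hxgt : H y₁ < x := by
      rw [abs_lt] at hdist
      linarith
    have hlt : Hinv x < y₁ := by
      by_contra h
      push_neg at h
      have := hanti y₁ (Hinv x) h
      rw [hinv_right x hx0.le] at this
      linarith
    have hge : y₀ < Hinv x := hinv_gt x hx0.le hx
    rw [abs_lt]
    constructor <;> linarith
  -- Hinv tends to 𝓝[>] y₀
  have htend : Tendsto Hinv (𝓝[Set.Iio z] z) (𝓝[Set.Ioi y₀] y₀) := by
    rw [tendsto_nhdsWithin_iff]
    refine ⟨htend0, ?_⟩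
    have h1 : Set.Ioo (0 : ℝ) z ∈ 𝓝[Set.Iio z] z := by
      apply mem_nhdsWithin.mpr
      exact ⟨Set.Ioi 0, isOpen_Ioi, hz, fun x hx => ⟨hx.1, hx.2⟩⟩
    filter_upwards [h1] with x hx
    exact hinv_gt x hx.1.le hx.2
  -- right derivative of H at y₀
  have hF : HasDerivWithinAt (fun y => ∫ t in y₀..y, (1 - G t)) (1 - G y₀)
      (Set.Ici y₀) y₀ := by
    exact intervalIntegral.integral_hasDerivWithinAt_right (t := Set.Ioi y₀) (hint y₀ y₀)
      ((measurable_const.sub hmono.measurable).stronglyMeasurable.stronglyMeasurableAtFilter)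
      (((continuousWithinAt_const).sub (hrc y₀)).mono Set.Ioi_subset_Ici_self)
  have hHderiv : HasDerivWithinAt H (G y₀ - 1) (Set.Ici y₀) y₀ := by
    have h1 : HasDerivWithinAt (fun y => z - ∫ t in y₀..y, (1 - G t)) (G y₀ - 1)
        (Set.Ici y₀) y₀ := by
      have h2 := (hasDerivWithinAt_const y₀ (Set.Ici y₀) z).sub hF
      exact h2.congr_deriv (by ring)
    refine h1.congr (fun y hy => ?_) (by simpa using hHy₀)
    have := key y₀ y hy
    linarith
  -- slope of H tends to G y₀ - 1 from the right
  have hslopeH : Tendsto (slope H y₀) (𝓝[Set.Ioi y₀] y₀) (𝓝 (G y₀ - 1)) := by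
    have := hasDerivWithinAt_iff_tendsto_slope.mp hHderiv
    rwa [Set.Ici_sdiff_left] at this
  -- compose
  have hcomp : Tendsto (fun x => slope H y₀ (Hinv x)) (𝓝[Set.Iio z] z)
      (𝓝 (G y₀ - 1)) := hslopeH.comp htend
  have hinvtend : Tendsto (fun x => (slope H y₀ (Hinv x))⁻¹) (𝓝[Set.Iio z] z)
      (𝓝 (G y₀ - 1)⁻¹) := hcomp.inv₀ hne
  -- the slopes agree eventually
  have heq : ∀ᶠ x in 𝓝[Set.Iio z] z,
      (slope H y₀ (Hinv x))⁻¹ = slope Hinv z x := by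
    have h1 : Set.Ioo (0 : ℝ) z ∈ 𝓝[Set.Iio z] z := by
      apply mem_nhdsWithin.mpr
      exact ⟨Set.Ioi 0, isOpen_Ioi, hz, fun x hx => ⟨hx.1, hx.2⟩⟩
    filter_upwards [h1] with x hx
    rw [slope_def_field, slope_def_field, hinv_right x hx.1.le, hHy₀, inv_div]
  rw [hasDerivWithinAt_iff_tendsto_slope, Set.Iic_diff_right, one_div]
  exact hinvtend.congr' heq
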